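/- In a combinatorial horoball on a connected graph Λ, any two vertices (x,k) and (y,ℓ) are joined by a geodesic whose image consists of at most two vertical segments and at most one horizontal segment. -/

import Mathlib

/-- The combinatorial horoball based on a graph `Λ`: vertices are `Λ⁰ × ℕ`,
vertical edges join `(v,n)` to `(v,n+1)`, horizontal edges join `(v,n)` to `(w,n)`
whenever `0 < d_Λ(v,w) ≤ 2^n`. -/
def horoball {V : Type*} (Λ : SimpleGraph V) : SimpleGraph (V × ℕ) where
  Adj a b := (a.1 = b.1 ∧ (a.2 + 1 = b.2 ∨ b.2 + 1 = a.2)) ∨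
    (a.2 = b.2 ∧ a.1 ≠ b.1 ∧ Λ.dist a.1 b.1 ≤ 2 ^ a.2)
  symm := by
    constructor
    rintro ⟨x, m⟩ ⟨y, k⟩ (⟨h1, h2⟩ | ⟨h1, h2, h3⟩)
    · exact Or.inl ⟨h1.symm, h2.symm⟩
    · exact Or.inr ⟨h1.symm, h2.symm, by rwa [SimpleGraph.dist_comm, ← h1]⟩
  loopless := by
    constructor
    rintro ⟨x, m⟩ (⟨_, h⟩ | ⟨_, h, _⟩) <;> simp_all

/-- The level-`n` subgraph of the combinatorial horoball on `Λ`, identified with a graph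
on the vertices of `Λ`: it is the Rips graph `Rips_{2^n}(Λ)`, whose edges join distinct
vertices at `Λ`-distance at most `2^n`. -/
def ripsLevel {V : Type*} (Λ : SimpleGraph V) (n : ℕ) : SimpleGraph V where
  Adj v w := v ≠ w ∧ Λ.dist v w ≤ 2 ^ n
  symm := ⟨fun v w h => ⟨h.1.symm, by rw [SimpleGraph.dist_comm]; exact h.2⟩⟩
  loopless := ⟨fun v h => h.1 rfl⟩

namespace HoroAux

open SimpleGraph

/-- ceiling division -/
def cdiv (d s : ℕ) : ℕ := (d + s - 1) / s

lemma cdiv_le_iff {s : ℕ} (hs : 0 < s) {d H : ℕ} : cdiv d s ≤ H ↔ d ≤ H * s := by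
  unfold cdiv
  rw [Nat.div_le_iff_le_mul_add_pred hs, Nat.mul_comm s H]
  omega

lemma le_cdiv_mul {s : ℕ} (hs : 0 < s) (d : ℕ) : d ≤ cdiv d s * s :=
  (cdiv_le_iff hs).1 le_rfl

lemma cdiv_zero {s : ℕ} (hs : 0 < s) : cdiv 0 s = 0 :=
  Nat.le_zero.1 ((cdiv_le_iff hs).2 (by simp))

lemma cdiv_mono {s : ℕ} (hs : 0 < s) {d d' : ℕ} (h : d ≤ d') : cdiv d s ≤ cdiv d' s :=
  (cdiv_le_iff hs).2 (h.trans (le_cdiv_mul hs d'))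

lemma cdiv_anti {t s : ℕ} (ht : 0 < t) (hts : t ≤ s) (d : ℕ) : cdiv d s ≤ cdiv d t :=
  (cdiv_le_iff (ht.trans_le hts)).2 ((le_cdiv_mul ht d).trans (Nat.mul_le_mul_left _ hts))

lemma cdiv_add_self {s : ℕ} (hs : 0 < s) (d : ℕ) : cdiv (d + s) s = cdiv d s + 1 := by
  unfold cdiv
  have h1 : d + s + s - 1 = (d + s - 1) + s := by omega
  rw [h1, Nat.add_div_right _ hs]

lemma cdiv_eq_one {d s : ℕ} (hs : 0 < d) (hd : d ≤ s) : cdiv d s = 1 := by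
  unfold cdiv
  have h0 : 0 < s := hs.trans_le hd
  apply Nat.div_eq_of_lt_le <;> omega

variable {V : Type*} {G : SimpleGraph V}

def takeW {u v : V} : (p : G.Walk u v) → (i : ℕ) → G.Walk u (p.getVert i)
  | SimpleGraph.Walk.nil, _ => SimpleGraph.Walk.nil
  | SimpleGraph.Walk.cons _ _, 0 => SimpleGraph.Walk.nil
  | SimpleGraph.Walk.cons h q, (i+1) => SimpleGraph.Walk.cons h (takeW q i)

lemma length_takeW_le {u v : V} (p : G.Walk u v) (i : ℕ) : (takeW p i).length ≤ i := by
  induction p generalizing i with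
  | nil => cases i <;> simp [takeW]
  | cons h q ih =>
    cases i with
    | zero => simp [takeW]; rfl
    | succ n => simpa [takeW] using ih n

lemma dist_getVert_le {u v : V} (p : G.Walk u v) (i : ℕ) :
    G.dist u (p.getVert i) ≤ i :=
  (SimpleGraph.dist_le (takeW p i)).trans (length_takeW_le p i)

lemma dist_getVert_right_le {u v : V} (p : G.Walk u v) (i : ℕ) :
    G.dist (p.getVert i) v ≤ p.length - i := by
  induction p generalizing i with
  | nil => simp [SimpleGraph.Walk.getVert, SimpleGraph.dist_self]
  | @cons a b c h q ih =>
    cases i with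
    | zero =>
      simpa using SimpleGraph.dist_le (SimpleGraph.Walk.cons h q)
    | succ n =>
      rw [SimpleGraph.Walk.getVert_cons_succ, SimpleGraph.Walk.length_cons]
      simpa using ih n

lemma horiz_walk {Λ : SimpleGraph V} (hΛ : Λ.Connected) (m : ℕ) :
    ∀ d x y, Λ.dist x y = d → ∃ w : (horoball Λ).Walk (x, m) (y, m),
      (∀ v ∈ w.support, v.2 = m) ∧ w.length = cdiv d (2 ^ m) := by
  intro d
  induction d using Nat.strong_induction_on with
  | _ d ih =>
    intro x y hd
    have hpow : 0 < 2 ^ m := Nat.pow_pos (by norm_num : 0 < 2)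
    rcases Nat.eq_zero_or_pos d with h0 | hpos
    · subst h0
      have hxy : x = y := (hΛ.dist_eq_zero_iff).1 hd
      subst hxy
      exact ⟨SimpleGraph.Walk.nil, by simp, by simp [cdiv_zero hpow]⟩
    · have hne : x ≠ y := by
        intro h; subst h; rw [SimpleGraph.dist_self] at hd; omega
      rcases le_or_gt d (2 ^ m) with hle | hgt
      · -- one edge
        have hadj : (horoball Λ).Adj (x, m) (y, m) :=
          Or.inr ⟨rfl, by simpa using hne, by simpa [hd] using hle⟩
        refine ⟨SimpleGraph.Walk.cons hadj SimpleGraph.Walk.nil, ?_, ?_⟩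
        · intro v hv; simp at hv; rcases hv with h | h <;> simp [h]
        · simp [cdiv_eq_one hpos hle]
      · -- jump of length 2^m
        obtain ⟨p, hp⟩ := hΛ.exists_walk_length_eq_dist x y
        set z := p.getVert (2 ^ m) with hz
        have h1 : Λ.dist x z ≤ 2 ^ m := dist_getVert_le p (2 ^ m)
        have h2 : Λ.dist z y ≤ d - 2 ^ m := by
          have := dist_getVert_right_le p (2 ^ m)
          rwa [hp, hd] at this
        have htri : d ≤ Λ.dist x z + Λ.dist z y := by
          rw [← hd]; exact hΛ.dist_triangle
        have h3 : Λ.dist z y = d - 2 ^ m := le_antisymm h2 (by omega)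
        have hzx : x ≠ z := by
          intro h
          rw [← h, hd] at h3
          omega
        have hadj : (horoball Λ).Adj (x, m) (z, m) :=
          Or.inr ⟨rfl, by simpa using hzx, by simpa using h1⟩
        obtain ⟨w', hsupp', hlen'⟩ := ih (d - 2 ^ m) (by omega) z y h3
        refine ⟨SimpleGraph.Walk.cons hadj w', ?_, ?_⟩
        · intro v hv
          rw [SimpleGraph.Walk.support_cons] at hv
          rcases List.mem_cons.1 hv with hcase | hcase
          · simp [hcase]
          · exact hsupp' v hcase
        · have heq : cdiv d (2 ^ m) = cdiv (d - 2 ^ m) (2 ^ m) + 1 := by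
            conv_lhs => rw [← Nat.sub_add_cancel hgt.le]
            exact cdiv_add_self hpow _
          rw [SimpleGraph.Walk.length_cons, hlen', heq]

/-- walk going down from level `k + n` to level `k`. -/
def downWalk (Λ : SimpleGraph V) (x : V) (k : ℕ) : (n : ℕ) → (horoball Λ).Walk (x, k + n) (x, k)
  | 0 => SimpleGraph.Walk.nil
  | n + 1 => SimpleGraph.Walk.cons
      (show (horoball Λ).Adj (x, k + (n + 1)) (x, k + n) from Or.inl ⟨rfl, Or.inr rfl⟩)
      (downWalk Λ x k n)

lemma length_downWalk (Λ : SimpleGraph V) (x : V) (k n : ℕ) :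
    (downWalk Λ x k n).length = n := by
  induction n with
  | zero => rfl
  | succ n ih => simp [downWalk, ih]

/-- vertical walk from `(x, m)` down to `(x, k)` for `k ≤ m`. -/
def vertWalk (Λ : SimpleGraph V) (x : V) {k m : ℕ} (h : k ≤ m) : (horoball Λ).Walk (x, m) (x, k) :=
  (downWalk Λ x k (m - k)).copy (by rw [Nat.add_sub_cancel' h]) rfl

lemma length_vertWalk (Λ : SimpleGraph V) (x : V) {k m : ℕ} (h : k ≤ m) :
    (vertWalk Λ x h).length = m - k := by
  simp [vertWalk, length_downWalk]

lemma lower_bound {Λ : SimpleGraph V} (hΛ : Λ.Connected) :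
    ∀ {a b : V × ℕ} (p : (horoball Λ).Walk a b),
      ∃ m : ℕ, a.2 ≤ m ∧ b.2 ≤ m ∧
        (m - a.2) + (m - b.2) + cdiv (Λ.dist a.1 b.1) (2 ^ m) ≤ p.length := by
  intro a b p
  induction p with
  | nil =>
    refine ⟨_, le_rfl, le_rfl, ?_⟩
    simp [SimpleGraph.dist_self, cdiv_zero (Nat.pow_pos (by norm_num : 0 < 2))]
  | @cons a c b h q ih =>
    obtain ⟨m', h1, h2, h3⟩ := ih
    rw [SimpleGraph.Walk.length_cons]
    rcases h with ⟨hx, hud⟩ | ⟨hlev, hne, hdle⟩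
    · -- vertical edge
      rcases hud with hup | hdown
      · -- going up: a.2 + 1 = c.2
        refine ⟨m', by omega, h2, ?_⟩
        rw [hx]
        omega
      · -- going down: c.2 + 1 = a.2
        rcases le_or_gt a.2 m' with hcase | hcase
        · refine ⟨m', hcase, h2, ?_⟩
          rw [hx]
          omega
        · -- m' = c.2, a.2 = m' + 1
          refine ⟨a.2, le_rfl, by omega, ?_⟩
          rw [hx]
          have hanti : cdiv (Λ.dist c.1 b.1) (2 ^ a.2) ≤ cdiv (Λ.dist c.1 b.1) (2 ^ m') :=
            cdiv_anti (Nat.pow_pos (by norm_num : 0 < 2))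
              (Nat.pow_le_pow_right (by norm_num) (by omega)) _
          omega
    · -- horizontal edge
      refine ⟨m', by omega, h2, ?_⟩
      have hpow : 0 < 2 ^ m' := Nat.pow_pos (by norm_num : 0 < 2)
      have htri : Λ.dist a.1 b.1 ≤ Λ.dist a.1 c.1 + Λ.dist c.1 b.1 := hΛ.dist_triangle
      have hd2 : Λ.dist a.1 b.1 ≤ Λ.dist c.1 b.1 + 2 ^ m' := by
        have : (2 : ℕ) ^ a.2 ≤ 2 ^ m' :=
          Nat.pow_le_pow_right (by norm_num) (by omega)
        omega
      have hc : cdiv (Λ.dist a.1 b.1) (2 ^ m') ≤ cdiv (Λ.dist c.1 b.1) (2 ^ m') + 1 := by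
        calc cdiv (Λ.dist a.1 b.1) (2 ^ m') ≤ cdiv (Λ.dist c.1 b.1 + 2 ^ m') (2 ^ m') :=
              cdiv_mono hpow hd2
          _ = cdiv (Λ.dist c.1 b.1) (2 ^ m') + 1 := cdiv_add_self hpow _
      omega

end HoroAux

/-- Any two vertices `(x,k)` and `(y,l)` of a combinatorial horoball are joined by a
geodesic consisting of at most two vertical segments and at most one horizontal
segment: there is a level `m ≥ k, l` and a horizontal walk `w` at level `m` from
`(x,m)` to `(y,m)` such that the vertical segment from `(x,k)` up to `(x,m)`, followed
by `w`, followed by the vertical segment from `(y,m)` down to `(y,l)`, has total length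
equal to the distance from `(x,k)` to `(y,l)`. -/
theorem horoball_geodesic_shape {V : Type*} (Λ : SimpleGraph V) (hΛ : Λ.Connected)
    (x y : V) (k l : ℕ) :
    ∃ m : ℕ, k ≤ m ∧ l ≤ m ∧ ∃ w : (horoball Λ).Walk (x, m) (y, m),
      (∀ v ∈ w.support, v.2 = m) ∧
      (m - k) + w.length + (m - l) = (horoball Λ).dist (x, k) (y, l) := by
  classical
  have hreach : (horoball Λ).Reachable (x, k) (y, l) := by
    obtain ⟨w0, -, -⟩ := HoroAux.horiz_walk hΛ (max k l) (Λ.dist x y) x y rfl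
    exact ⟨(HoroAux.vertWalk Λ x (le_max_left k l)).reverse.append
      (w0.append (HoroAux.vertWalk Λ y (le_max_right k l)))⟩
  obtain ⟨p, hp⟩ := hreach.exists_walk_length_eq_dist
  obtain ⟨m, hk, hl, hbound⟩ := HoroAux.lower_bound hΛ p
  simp only at hbound hk hl
  obtain ⟨w, hsupp, hlen⟩ := HoroAux.horiz_walk hΛ m (Λ.dist x y) x y rfl
  refine ⟨m, hk, hl, w, hsupp, ?_⟩
  have hupper : (horoball Λ).dist (x, k) (y, l) ≤ (m - k) + (w.length + (m - l)) := by
    have h := SimpleGraph.dist_le ((HoroAux.vertWalk Λ x hk).reverse.append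
      (w.append (HoroAux.vertWalk Λ y hl)))
    simpa [SimpleGraph.Walk.length_append, SimpleGraph.Walk.length_reverse,
      HoroAux.length_vertWalk] using h
  rw [hp] at hbound
  omega
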